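/- Let d ≥ 2 and P : F_p^n → ℝ/ℤ a nonclassical polynomial with r = rank_d(P) finite. Then there exists a nonclassical polynomial Q of degree at most d-1 such that |⟨e(P), e(Q)⟩| ≥ p^{-(1+⌈(d-1)/(p-1)⌉)r}. -/

import Mathlib

open scoped BigOperators

/-- Additive derivative of a map `P` in direction `h`. -/
def addDeriv {G M : Type*} [Add G] [Sub M] (h : G) (P : G → M) : G → M :=
  fun x => P (x + h) - P x

/-- Iterated additive derivative along a list of directions. -/
def itDeriv {G M : Type*} [Add G] [Sub M] : List G → (G → M) → (G → M)
  | [], P => P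
  | h :: t, P => addDeriv h (itDeriv t P)

/-- `P` is a (nonclassical) polynomial of degree at most `d`: all `(d+1)`-fold
additive derivatives vanish. -/
def DegLE {G M : Type*} [Add G] [SubtractionMonoid M] (d : ℕ) (P : G → M) : Prop :=
  ∀ l : List G, l.length = d + 1 → ∀ x, itDeriv l P x = 0

section Aux
variable {G : Type*} [AddCommGroup G] {M : Type*} [AddCommGroup M]

lemma itDeriv_concat (l : List G) (h : G) (Q : G → M) :
    itDeriv l (addDeriv h Q) = itDeriv (l ++ [h]) Q := by
  induction l with
  | nil => rfl
  | cons a t ih => show addDeriv a _ = _; rw [ih]; rfl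

lemma degLE_succ {m : ℕ} {Q : G → M} (hQ : DegLE m Q) : DegLE (m + 1) Q := by
  intro l hl x
  match l, hl with
  | a :: t, hl =>
    have ht : t.length = m + 1 := by simpa using hl
    have h0 : ∀ y, itDeriv t Q y = 0 := hQ t ht
    simp [itDeriv, addDeriv, h0]

lemma degLE_mono {a b : ℕ} (hab : a ≤ b) {Q : G → M} (hQ : DegLE a Q) : DegLE b Q := by
  induction b, hab using Nat.le_induction with
  | base => exact hQ
  | succ n hn ih => exact degLE_succ ih

lemma degLE_addDeriv {m : ℕ} {Q : G → M} (hQ : DegLE m Q) (h : G) :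
    DegLE (m - 1) (addDeriv h Q) := by
  intro l hl x
  have h2 : DegLE (m - 1 + 1) Q := degLE_mono (by omega) hQ
  rw [itDeriv_concat]
  exact h2 (l ++ [h]) (by simp [hl]) x

lemma degLE_itDeriv_replicate {m : ℕ} {Q : G → M} (hQ : DegLE m Q) (h : G) (j : ℕ) :
    DegLE (m - j) (itDeriv (List.replicate j h) Q) := by
  induction j with
  | zero => simpa [itDeriv] using hQ
  | succ k ih =>
      have : DegLE (m - k - 1) (addDeriv h (itDeriv (List.replicate k h) Q)) :=
        degLE_addDeriv ih h
      have e : List.replicate (k+1) h = h :: List.replicate k h := rfl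
      rw [e]
      show DegLE (m - (k+1)) (addDeriv h (itDeriv (List.replicate k h) Q))
      have : m - (k+1) = m - k - 1 := by omega
      rw [this]
      exact degLE_addDeriv ih h

lemma degLE_add {m : ℕ} {A B : G → M} (hA : DegLE m A) (hB : DegLE m B) :
    DegLE m (fun x => A x + B x) := by
  have key : ∀ l : List G, ∀ x, itDeriv l (fun x => A x + B x) x
      = itDeriv l A x + itDeriv l B x := by
    intro l
    induction l with
    | nil => intro x; rfl
    | cons a t ih =>
        intro x
        show addDeriv a (itDeriv t fun x => A x + B x) x = _
        simp only [addDeriv, ih, itDeriv]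
        abel
  intro l hl x
  rw [key l x, hA l hl x, hB l hl x, add_zero]

lemma degLE_nsmul {m : ℕ} {A : G → M} (hA : DegLE m A) (k : ℕ) :
    DegLE m (fun x => k • A x) := by
  have key : ∀ l : List G, ∀ x, itDeriv l (fun x => k • A x) x
      = k • itDeriv l A x := by
    intro l
    induction l with
    | nil => intro x; rfl
    | cons a t ih =>
        intro x
        show addDeriv a (itDeriv t fun x => k • A x) x = _
        simp only [addDeriv, ih, itDeriv, smul_sub]
  intro l hl x
  rw [key l x, hA l hl x, smul_zero]

lemma degLE_neg {m : ℕ} {A : G → M} (hA : DegLE m A) :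
    DegLE m (fun x => - A x) := by
  have key : ∀ l : List G, ∀ x, itDeriv l (fun x => - A x) x
      = - itDeriv l A x := by
    intro l
    induction l with
    | nil => intro x; rfl
    | cons a t ih =>
        intro x
        show addDeriv a (itDeriv t fun x => - A x) x = _
        simp only [addDeriv, ih, itDeriv]
        abel
  intro l hl x
  rw [key l x, hA l hl x, neg_zero]

lemma degLE_const {m : ℕ} (c : M) : DegLE m (fun _ : G => c) := by
  have h0 : DegLE 0 (fun _ : G => c) := by
    intro l hl x
    match l, hl with
    | [a], _ => show addDeriv a _ x = 0; simp [addDeriv, itDeriv]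
  exact degLE_mono (Nat.zero_le m) h0

lemma degLE_sub {m : ℕ} {A B : G → M} (hA : DegLE m A) (hB : DegLE m B) :
    DegLE m (fun x => A x - B x) := by
  have := degLE_add hA (degLE_neg hB)
  simpa [sub_eq_add_neg] using this

lemma degLE_sum {m : ℕ} {ι : Type*} (s : Finset ι) (f : ι → G → M)
    (hf : ∀ i ∈ s, DegLE m (f i)) :
    DegLE m (fun x => ∑ i ∈ s, f i x) := by
  classical
  induction s using Finset.induction_on with
  | empty => simpa using degLE_const (0 : M)
  | insert a s hnotmem ih =>
      have h1 : DegLE m (f a) := hf a (Finset.mem_insert_self a s)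
      have h2 : DegLE m (fun x => ∑ i ∈ s, f i x) :=
        ih (fun i hi => hf i (Finset.mem_insert_of_mem hi))
      have := degLE_add h1 h2
      intro l hl x
      have e : ∀ x, (∑ i ∈ insert a s, f i x) = f a x + ∑ i ∈ s, f i x := by
        intro x; rw [Finset.sum_insert hnotmem]
      simp only [e]
      exact this l hl x

end Aux

section Endo
variable {G : Type*} [AddCommGroup G] {M : Type*} [AddCommGroup M]

/-- Translation by `h` as an additive endomorphism of `G → M`. -/
def shiftE (h : G) : AddMonoid.End (G → M) :=
  AddMonoidHom.mk' (fun Q => fun x => Q (x + h)) (fun _ _ => rfl)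

lemma shiftE_pow (h : G) (k : ℕ) (Q : G → M) (x : G) :
    (((shiftE h) ^ k : AddMonoid.End (G → M)) Q) x = Q (x + k • h) := by
  induction k generalizing x with
  | zero => simp
  | succ j ih =>
      rw [pow_succ']
      show (shiftE h) (((shiftE h) ^ j : AddMonoid.End (G → M)) Q) x = _
      show (((shiftE h) ^ j : AddMonoid.End (G → M)) Q) (x + h) = _
      rw [ih]
      congr 1
      rw [succ_nsmul]
      abel

/-- Difference operator as an additive endomorphism. -/
def diffE (h : G) : AddMonoid.End (G → M) := shiftE h - 1

lemma diffE_pow (h : G) (k : ℕ) (Q : G → M) :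
    (((diffE h) ^ k : AddMonoid.End (G → M)) Q) = itDeriv (List.replicate k h) Q := by
  induction k with
  | zero => rfl
  | succ j ih =>
      rw [pow_succ']
      show (diffE h) (((diffE h) ^ j : AddMonoid.End (G → M)) Q) = _
      rw [ih]
      rfl

lemma binom_identity (p : ℕ) (h : G) (hh : p • h = 0) (Q : G → M) (x : G) :
    ∑ k ∈ Finset.range (p + 1),
      (p.choose k) • itDeriv (List.replicate k h) Q x = Q x := by
  have hcomm : Commute (diffE h : AddMonoid.End (G → M)) 1 := Commute.one_right _
  have hpow := hcomm.add_pow p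
  have hsum : ((diffE h + 1 : AddMonoid.End (G → M)) ^ p) Q x = Q x := by
    have e1 : (diffE h + 1 : AddMonoid.End (G → M)) = shiftE h := by
      simp [diffE]
    rw [e1, shiftE_pow, hh, add_zero]
  rw [hpow] at hsum
  rw [← hsum]
  erw [AddMonoidHom.finset_sum_apply]
  rw [Finset.sum_apply]
  refine Finset.sum_congr rfl ?_
  intro k hk
  simp only [one_pow, mul_one]
  symm
  show ((diffE h ^ k : AddMonoid.End (G → M)) ((((p.choose k : ℕ) : AddMonoid.End (G → M))) Q)) x = _
  rw [AddMonoid.End.natCast_apply]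
  rw [map_nsmul]
  rw [diffE_pow]
  rfl

end Endo

/-- `⌈m / (p-1)⌉` as a natural number (for `p ≥ 2`). -/
def cdeg (p m : ℕ) : ℕ := (m + p - 2) / (p - 1)

lemma cdeg_eq (p m : ℕ) (hp : 2 ≤ p) (hm : 1 ≤ m) :
    cdeg p m = (m - 1) / (p - 1) + 1 := by
  unfold cdeg
  have h : m + p - 2 = (m - 1) + (p - 1) := by omega
  rw [h, Nat.add_div_right _ (by omega)]

lemma cdeg_mono (p : ℕ) {a b : ℕ} (hab : a ≤ b) : cdeg p a ≤ cdeg p b :=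
  Nat.div_le_div_right (by omega)

lemma cdeg_sub_le (p m : ℕ) (hp : 2 ≤ p) (hm : 1 ≤ m) :
    cdeg p (m - (p - 1)) ≤ cdeg p m - 1 := by
  rcases le_or_gt m (p - 1) with h | h
  · have : m - (p - 1) = 0 := by omega
    rw [this]
    unfold cdeg
    rw [Nat.div_eq_of_lt (by omega)]
    omega
  · have hm' : 1 ≤ m - (p - 1) := by omega
    rw [cdeg_eq p _ hp hm', cdeg_eq p m hp hm]
    have h2 : m - (p - 1) - 1 = (m - 1) - (p - 1) := by omega
    rw [h2]
    have h3 : (m - 1) = ((m - 1) - (p - 1)) + (p - 1) := by omega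
    conv_rhs => rw [h3]
    rw [Nat.add_div_right _ (by omega)]
    omega

section Torsion
variable {G : Type*} [AddCommGroup G] {M : Type*} [AddCommGroup M]

lemma torsion_main {p : ℕ} (hp : p.Prime) (hG : ∀ g : G, p • g = 0) :
    ∀ m : ℕ, ∀ Q : G → M, DegLE m Q →
      ∀ h x, p ^ (cdeg p m) • addDeriv h Q x = 0 := by
  intro m
  induction m using Nat.strong_induction_on with
  | _ m ih =>
    intro Q hQ h x
    rcases Nat.eq_zero_or_pos m with hm | hm
    · subst hm
      have h0 : addDeriv h Q x = 0 := hQ [h] rfl x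
      rw [h0, smul_zero]
    · have hp2 : 2 ≤ p := hp.two_le
      have hkey := binom_identity p h (hG h) Q x
      have h00 : ∑ k ∈ Finset.Ico 1 (p+1),
          (p.choose k) • itDeriv (List.replicate k h) Q x = 0 := by
        rw [Finset.range_eq_Ico] at hkey
        rw [Finset.sum_eq_sum_Ico_succ_bot (by omega : 0 < p + 1)
          (fun k => (p.choose k) • itDeriv (List.replicate k h) Q x)] at hkey
        simp only [Nat.choose_zero_right, one_smul, List.replicate_zero, itDeriv] at hkey
        exact (add_eq_left).mp hkey
      set c := cdeg p m with hc
      have hc1 : 1 ≤ c := by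
        rw [hc, cdeg_eq p m hp2 hm]
        exact Nat.succ_le_succ (Nat.zero_le _)
      have h01 : ∑ k ∈ Finset.Ico 1 (p+1),
          p ^ (c-1) • ((p.choose k) • itDeriv (List.replicate k h) Q x) = 0 := by
        rw [← Finset.smul_sum, h00, smul_zero]
      have hterm : ∀ k ∈ Finset.Ico 1 (p+1), k ≠ 1 →
          p ^ (c-1) • ((p.choose k) • itDeriv (List.replicate k h) Q x) = 0 := by
        intro k hk hk1
        rw [Finset.mem_Ico] at hk
        have hk2 : 2 ≤ k := by omega
        have hkp : k ≤ p := by omega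
        have hsplit : itDeriv (List.replicate k h) Q
            = addDeriv h (itDeriv (List.replicate (k-1) h) Q) := by
          have hke : k = (k-1) + 1 := by omega
          rw [hke]; rfl
        have hdeg : DegLE (m - (k-1)) (itDeriv (List.replicate (k-1) h) Q) :=
          degLE_itDeriv_replicate hQ h (k-1)
        have hlt : m - (k-1) < m := by omega
        have hIH := ih (m - (k-1)) hlt _ hdeg h x
        rw [← hsplit] at hIH
        rcases eq_or_lt_of_le hkp with hkp' | hkp'
        · have hchoose : p.choose k = 1 := by rw [hkp']; exact Nat.choose_self p
          rw [hchoose, one_smul]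
          have hle : cdeg p (m - (k-1)) ≤ c - 1 := by
            rw [hkp']; exact cdeg_sub_le p m hp2 hm
          have hee : p ^ (c-1) = p ^ ((c-1) - cdeg p (m-(k-1))) * p ^ (cdeg p (m-(k-1))) := by
            rw [← pow_add]; congr 1; omega
          rw [hee, mul_smul, hIH, smul_zero]
        · obtain ⟨e, he⟩ := hp.dvd_choose_self (by omega) hkp'
          rw [he]
          have hle : cdeg p (m - (k-1)) ≤ c := hc ▸ cdeg_mono p (by omega)
          have hpc : p ^ c • itDeriv (List.replicate k h) Q x = 0 := by
            have hee : p ^ c = p ^ (c - cdeg p (m-(k-1))) * p ^ (cdeg p (m-(k-1))) := by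
              rw [← pow_add]; congr 1; omega
            rw [hee, mul_smul, hIH, smul_zero]
          calc p ^ (c-1) • ((p * e) • itDeriv (List.replicate k h) Q x)
              = e • (p ^ c • itDeriv (List.replicate k h) Q x) := by
                rw [smul_smul, smul_smul]
                congr 1
                have hce : p ^ c = p ^ (c-1) * p := by
                  conv_lhs => rw [show c = (c-1)+1 by omega]
                  rw [pow_succ]
                rw [hce]
                ring
            _ = 0 := by rw [hpc, smul_zero]
      have h1mem : (1:ℕ) ∈ Finset.Ico 1 (p+1) := by
        rw [Finset.mem_Ico]; omega
      rw [Finset.sum_eq_single_of_mem 1 h1mem (fun b hb hb1 => hterm b hb hb1)] at h01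
      rw [Nat.choose_one_right] at h01
      have hrep1 : itDeriv (List.replicate 1 h) Q = addDeriv h Q := rfl
      rw [hrep1, smul_smul] at h01
      have hee : p ^ (c-1) * p = p ^ c := by
        conv_rhs => rw [show c = (c-1)+1 by omega]
        rw [pow_succ]
      rwa [hee] at h01

lemma torsion_values {p m : ℕ} (hp : p.Prime) (hG : ∀ g : G, p • g = 0)
    {Q : G → M} (hQ : DegLE m Q) (x : G) :
    p ^ (cdeg p m) • (Q x - Q 0) = 0 := by
  have h := torsion_main hp hG m Q hQ x 0
  simpa [addDeriv, zero_add] using h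

end Torsion

/-- The set of sizes of decompositions `P = Γ(Q₁,…,Q_r)` with `deg Qᵢ ≤ d - 1`;
its least element is `rank_d(P)`. -/
def rankSet (p n d : ℕ) (P : (Fin n → ZMod p) → AddCircle (1 : ℝ)) : Set ℕ :=
  {r | ∃ (Q : Fin r → (Fin n → ZMod p) → AddCircle (1 : ℝ))
        (_ : ∀ i, DegLE (d - 1) (Q i))
        (Γ : (Fin r → AddCircle (1 : ℝ)) → AddCircle (1 : ℝ)),
      ∀ x, Γ (fun i => Q i x) = P x}

/-- The exponential `e(t) = exp(2πit)` on `ℝ/ℤ`. -/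
noncomputable def ee (t : AddCircle (1 : ℝ)) : ℂ := (AddCircle.toCircle t : ℂ)

/-- Averaged inner product of two complex-valued functions on `F_p^n`. -/
noncomputable def avgInner (p n : ℕ) [NeZero p] (u v : (Fin n → ZMod p) → ℂ) : ℂ :=
  (1 / (p : ℂ) ^ n) * ∑ x : Fin n → ZMod p, u x * (starRingEnd ℂ) (v x)


lemma exists_zmod_rep (N : ℕ) [NeZero N] (u : AddCircle (1:ℝ)) (hu : N • u = 0) :
    ∃ j : ZMod N, ZMod.toAddCircle j = u := by
  obtain ⟨x, rfl⟩ := QuotientAddGroup.mk_surjective u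
  have hN : (N:ℝ) ≠ 0 := Nat.cast_ne_zero.mpr (NeZero.ne N)
  have h1 : ((N • x : ℝ) : AddCircle (1:ℝ)) = 0 := by
    rw [AddCircle.coe_nsmul]; exact hu
  rw [AddCircle.coe_eq_zero_iff] at h1
  obtain ⟨n, hn⟩ := h1
  refine ⟨(n : ZMod N), ?_⟩
  rw [ZMod.toAddCircle_intCast]
  have hx : ((n:ℝ) / N) = x := by
    rw [zsmul_eq_mul, mul_one] at hn
    rw [nsmul_eq_mul] at hn
    field_simp
    linarith [hn]
  rw [hx]

lemma ee_toAddCircle {N : ℕ} [NeZero N] (j : ZMod N) :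
    ee (ZMod.toAddCircle j) = ZMod.stdAddChar j := rfl

lemma abs_ee (t : AddCircle (1:ℝ)) : ‖ee t‖ = 1 := Circle.norm_coe _

lemma conj_stdAddChar {N : ℕ} [NeZero N] (a : ZMod N) :
    (starRingEnd ℂ) (ZMod.stdAddChar a) = ZMod.stdAddChar (-a) := by
  have h1 : ‖ZMod.stdAddChar a‖ = 1 := by
    rw [ZMod.stdAddChar_apply]; exact Circle.norm_coe _
  rw [← Complex.inv_eq_conj h1]
  have h2 : ZMod.stdAddChar a * ZMod.stdAddChar (-a) = 1 := by
    rw [← AddChar.map_add_eq_mul]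
    simp
  exact (eq_inv_of_mul_eq_one_right h2).symm


/-- The character `t ↦ e(∑ tᵢaᵢ/N)` on `(ZMod N)^r`. -/
noncomputable def vecChar {N r : ℕ} [NeZero N] (a : Fin r → ZMod N) :
    AddChar (Fin r → ZMod N) ℂ where
  toFun := fun t => ZMod.stdAddChar (∑ i, t i * a i)
  map_zero_eq_one' := by simp
  map_add_eq_mul' := by
    intro b c
    show ZMod.stdAddChar _ = ZMod.stdAddChar _ * ZMod.stdAddChar _
    rw [← AddChar.map_add_eq_mul]
    congr 1
    rw [← Finset.sum_add_distrib]
    refine Finset.sum_congr rfl fun i _ => ?_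
    show (b i + c i) * a i = _
    ring

lemma vecChar_apply {N r : ℕ} [NeZero N] (a t : Fin r → ZMod N) :
    vecChar a t = ZMod.stdAddChar (∑ i, t i * a i) := rfl

lemma orth {N : ℕ} [NeZero N] {r : ℕ} (a : Fin r → ZMod N) :
    ∑ t : Fin r → ZMod N, ZMod.stdAddChar (∑ i, t i * a i)
      = if a = 0 then ((N:ℂ)) ^ r else 0 := by
  classical
  by_cases ha : a = 0
  · subst ha
    have h0 : ∀ t : Fin r → ZMod N, (∑ i, t i * (0 : Fin r → ZMod N) i) = 0 := by
      intro t; simp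
    simp only [h0, AddChar.map_zero_eq_one, if_pos rfl]
    rw [Finset.sum_const, Finset.card_univ]
    rw [Fintype.card_fun, ZMod.card, Fintype.card_fin]
    simp
  · rw [if_neg ha]
    have he : ∀ t : Fin r → ZMod N,
        ZMod.stdAddChar (∑ i, t i * a i) = vecChar a t := fun _ => rfl
    rw [Finset.sum_congr rfl fun t _ => he t]
    refine AddChar.sum_eq_zero_of_ne_one ?_
    obtain ⟨i, hi⟩ : ∃ i, a i ≠ 0 := by
      by_contra hcon; push_neg at hcon; exact ha (funext hcon)
    have hprim := ZMod.isPrimitive_stdAddChar N hi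
    obtain ⟨u, hu⟩ := AddChar.ne_one_iff.mp hprim
    rw [AddChar.ne_one_iff]
    refine ⟨Pi.single i u, ?_⟩
    rw [vecChar_apply]
    have hs : ∑ j, (Pi.single i u : Fin r → ZMod N) j * a j = u * a i := by
      rw [Finset.sum_eq_single i]
      · simp
      · intro b _ hb; simp [Pi.single_apply, hb]
      · intro hmem; exact absurd (Finset.mem_univ i) hmem
    rw [hs]
    simpa [AddChar.mulShift_apply, mul_comm] using hu

theorem stmt_15 (p : ℕ) [NeZero p] (hp : p.Prime) (n d r : ℕ) (hd : 2 ≤ d)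
    (P : (Fin n → ZMod p) → AddCircle (1 : ℝ))
    (hrank : IsLeast (rankSet p n d P) r) :
    ∃ Q : (Fin n → ZMod p) → AddCircle (1 : ℝ),
      DegLE (d - 1) Q ∧
      (p : ℝ) ^ (-((1 + ⌈((d : ℚ) - 1) / ((p : ℚ) - 1)⌉) * r))
        ≤ ‖avgInner p n (fun x => ee (P x)) (fun x => ee (Q x))‖ := by
  classical
  obtain ⟨⟨Q, hQdeg, Γ, hΓ⟩, -⟩ := hrank
  have hp2 : 2 ≤ p := hp.two_le
  set m := d - 1 with hm
  have hm1 : 1 ≤ m := by omega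
  set c := cdeg p m with hc
  set N := p ^ c with hN
  haveI : NeZero N := ⟨pow_ne_zero _ hp.ne_zero⟩
  have hG : ∀ g : Fin n → ZMod p, p • g = 0 := by
    intro g; funext i
    show p • g i = 0
    rw [nsmul_eq_mul, ZMod.natCast_self, zero_mul]
  -- choose representatives
  have hrep : ∀ x i, ∃ j : ZMod N, ZMod.toAddCircle j = Q i x - Q i 0 := by
    intro x i
    exact exists_zmod_rep N _ (torsion_values hp hG (hQdeg i) x)
  choose q hq using hrep
  -- the combined function
  have hPF : ∀ x, Γ (fun i => Q i 0 + ZMod.toAddCircle (q x i)) = P x := by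
    intro x
    rw [← hΓ x]
    congr 1; funext i
    rw [hq x i, add_sub_cancel]
  set F : (Fin r → ZMod N) → AddCircle (1:ℝ) :=
    fun s => Γ (fun i => Q i 0 + ZMod.toAddCircle (s i)) with hF
  -- the candidate polynomials
  set Qt : (Fin r → ZMod N) → (Fin n → ZMod p) → AddCircle (1:ℝ) :=
    fun t x => ∑ i, (t i).val • (Q i x - Q i 0) with hQt
  have hQtdeg : ∀ t, DegLE m (Qt t) := by
    intro t
    refine degLE_sum Finset.univ _ (fun i _ => ?_)
    exact degLE_nsmul (degLE_sub (hQdeg i) (degLE_const _)) _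
  have heeQt : ∀ t x, ee (Qt t x) = ZMod.stdAddChar (∑ i, t i * q x i) := by
    intro t x
    have h2 : ∀ i, (t i).val • (Q i x - Q i 0) = ZMod.toAddCircle (t i * q x i) := by
      intro i
      rw [← hq x i, ← map_nsmul]
      congr 1
      rw [nsmul_eq_mul, ZMod.natCast_val, ZMod.cast_id]
    have h1 : Qt t x = ZMod.toAddCircle (∑ i, t i * q x i) := by
      show (∑ i, (t i).val • (Q i x - Q i 0)) = _
      rw [map_sum]
      exact Finset.sum_congr rfl fun i _ => h2 i
    rw [h1, ee_toAddCircle]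
  -- Fourier coefficients
  set w : (Fin r → ZMod N) → ℂ := fun t =>
    (1 / (N:ℂ)^r) * ∑ s : Fin r → ZMod N,
      ZMod.stdAddChar (∑ i, t i * s i) * (starRingEnd ℂ) (ee (F s)) with hw
  have hNC : ((N:ℂ))^r ≠ 0 := pow_ne_zero _ (Nat.cast_ne_zero.mpr (NeZero.ne N))
  have hNR : ((N:ℝ))^r ≠ 0 := pow_ne_zero _ (Nat.cast_ne_zero.mpr (NeZero.ne N))
  -- key pointwise identity
  have hkey : ∀ x, ∑ t : Fin r → ZMod N, w t * (starRingEnd ℂ) (ee (Qt t x))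
      = (starRingEnd ℂ) (ee (P x)) := by
    intro x
    have stepA : ∀ t, w t * (starRingEnd ℂ) (ee (Qt t x))
        = (1 / (N:ℂ)^r) * ∑ s : Fin r → ZMod N,
            (starRingEnd ℂ) (ee (F s)) * ZMod.stdAddChar (∑ i, t i * (s i - q x i)) := by
      intro t
      rw [heeQt t x, conj_stdAddChar]
      show (1 / (N:ℂ)^r) * (∑ s : Fin r → ZMod N, _) * _ = _
      rw [mul_assoc, Finset.sum_mul]
      congr 1
      refine Finset.sum_congr rfl fun s _ => ?_
      rw [mul_comm (ZMod.stdAddChar (∑ i, t i * s i)) _, mul_assoc, ← AddChar.map_add_eq_mul]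
      congr 2
      rw [← sub_eq_add_neg, eq_comm]
      simp [mul_sub, Finset.sum_sub_distrib]
    rw [Finset.sum_congr rfl (fun t _ => stepA t), ← Finset.mul_sum, Finset.sum_comm]
    have stepB : ∀ s : Fin r → ZMod N,
        (∑ t : Fin r → ZMod N, (starRingEnd ℂ) (ee (F s))
            * ZMod.stdAddChar (∑ i, t i * (s i - q x i)))
        = (starRingEnd ℂ) (ee (F s))
            * (if (fun i => s i - q x i) = 0 then ((N:ℂ))^r else 0) := by
      intro s
      rw [← Finset.mul_sum, orth]
    rw [Finset.sum_congr rfl (fun s _ => stepB s)]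
    have hiff : ∀ s : Fin r → ZMod N, ((fun i => s i - q x i) = 0) ↔ s = q x := by
      intro s
      constructor
      · intro hs; funext i
        have := congrFun hs i
        simpa [sub_eq_zero] using this
      · intro hs; subst hs; funext i; simp
    have step3 : ∀ s : Fin r → ZMod N,
        (starRingEnd ℂ) (ee (F s)) * (if (fun i => s i - q x i) = 0 then ((N:ℂ))^r else 0)
        = if s = q x then (starRingEnd ℂ) (ee (F s)) * ((N:ℂ))^r else 0 := by
      intro s
      by_cases hs : s = q x
      · rw [if_pos ((hiff s).mpr hs), if_pos hs]
      · rw [if_neg (fun hcon => hs ((hiff s).mp hcon)), if_neg hs, mul_zero]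
    rw [Finset.sum_congr rfl (fun s _ => step3 s)]
    rw [Finset.sum_ite_eq' Finset.univ (q x)
      (fun s => (starRingEnd ℂ) (ee (F s)) * ((N:ℂ))^r)]
    rw [if_pos (Finset.mem_univ _)]
    have : F (q x) = P x := hPF x
    rw [this]
    field_simp
  -- the main averaged identity
  have hz1 : ∀ u : AddCircle (1:ℝ), ee u * (starRingEnd ℂ) (ee u) = 1 := by
    intro u
    rw [Complex.mul_conj, Complex.normSq_eq_norm_sq, abs_ee]
    norm_num
  have hpC : ((p:ℂ))^n ≠ 0 := pow_ne_zero _ (Nat.cast_ne_zero.mpr (NeZero.ne p))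
  have hcard : (Fintype.card (Fin n → ZMod p) : ℂ) = (p:ℂ)^n := by
    rw [Fintype.card_fun, ZMod.card, Fintype.card_fin]
    push_cast; ring
  have hmain : ∑ t : Fin r → ZMod N,
      w t * avgInner p n (fun x => ee (P x)) (fun x => ee (Qt t x)) = 1 := by
    have e1 : ∀ t, w t * avgInner p n (fun x => ee (P x)) (fun x => ee (Qt t x))
        = (1/(p:ℂ)^n) * ∑ x : Fin n → ZMod p,
            ee (P x) * (w t * (starRingEnd ℂ) (ee (Qt t x))) := by
      intro t
      have hco : ∀ x : Fin n → ZMod p, ee (P x) * (w t * (starRingEnd ℂ) (ee (Qt t x)))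
          = w t * (ee (P x) * (starRingEnd ℂ) (ee (Qt t x))) := fun x => by ring
      rw [Finset.sum_congr rfl (fun x _ => hco x), ← Finset.mul_sum]
      show w t * ((1 / (p : ℂ) ^ n) * ∑ x : Fin n → ZMod p,
        ee (P x) * (starRingEnd ℂ) (ee (Qt t x))) = _
      ring
    rw [Finset.sum_congr rfl (fun t _ => e1 t), ← Finset.mul_sum, Finset.sum_comm]
    have e2 : ∀ x : Fin n → ZMod p,
        (∑ t : Fin r → ZMod N, ee (P x) * (w t * (starRingEnd ℂ) (ee (Qt t x)))) = 1 := by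
      intro x
      rw [← Finset.mul_sum, hkey x, hz1]
    rw [Finset.sum_congr rfl (fun x _ => e2 x)]
    rw [Finset.sum_const, Finset.card_univ, nsmul_eq_mul, mul_one, hcard]
    field_simp
  -- |w t| ≤ 1
  have habs_w : ∀ t, ‖w t‖ ≤ 1 := by
    intro t
    have h1 : ‖w t‖ ≤ (1/(N:ℝ)^r) * ∑ s : Fin r → ZMod N, (1:ℝ) := by
      show ‖_ * _‖ ≤ _
      rw [norm_mul]
      have hD : ‖1 / (N:ℂ)^r‖ = 1/(N:ℝ)^r := by
        rw [norm_div, norm_one, norm_pow, Complex.norm_natCast]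
      rw [hD]
      refine mul_le_mul_of_nonneg_left ?_ (by positivity)
      refine le_trans (norm_sum_le _ _) ?_
      refine Finset.sum_le_sum fun s _ => ?_
      rw [norm_mul, Complex.norm_conj, abs_ee, mul_one]
      rw [ZMod.stdAddChar_apply]
      exact le_of_eq (Circle.norm_coe _)
    calc ‖w t‖ ≤ (1/(N:ℝ)^r) * ∑ s : Fin r → ZMod N, (1:ℝ) := h1
      _ = 1 := by
          rw [Finset.sum_const, Finset.card_univ, Fintype.card_fun, ZMod.card,
            Fintype.card_fin, nsmul_eq_mul, mul_one]
          push_cast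
          field_simp
  -- pigeonhole
  have h1le : ∑ t : Fin r → ZMod N, (1/(N:ℝ)^r)
      ≤ ∑ t : Fin r → ZMod N,
          ‖avgInner p n (fun x => ee (P x)) (fun x => ee (Qt t x))‖ := by
    have hL : ∑ t : Fin r → ZMod N, (1/(N:ℝ)^r) = 1 := by
      rw [Finset.sum_const, Finset.card_univ, Fintype.card_fun, ZMod.card,
        Fintype.card_fin, nsmul_eq_mul]
      field_simp
      exact Nat.cast_pow N r
    rw [hL]
    have : (1:ℝ) = ‖∑ t : Fin r → ZMod N,
        w t * avgInner p n (fun x => ee (P x)) (fun x => ee (Qt t x))‖ := by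
      rw [hmain, norm_one]
    rw [this]
    refine le_trans (norm_sum_le _ _) ?_
    refine Finset.sum_le_sum fun t _ => ?_
    rw [norm_mul]
    exact mul_le_of_le_one_left (norm_nonneg _) (habs_w t)
  obtain ⟨t0, -, ht0⟩ := Finset.exists_le_of_sum_le Finset.univ_nonempty h1le
  refine ⟨Qt t0, hQtdeg t0, ?_⟩
  refine le_trans ?_ ht0
  -- numeric bound
  have hcK : (c : ℤ) ≤ 1 + ⌈((d : ℚ) - 1) / ((p : ℚ) - 1)⌉ := by
    have hceq : c = (m - 1)/(p - 1) + 1 := cdeg_eq p m hp2 hm1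
    have hp1pos : (0:ℚ) < ((p-1:ℕ):ℚ) := by
      have : 1 ≤ p - 1 := by omega
      exact_mod_cast Nat.lt_of_lt_of_le Nat.zero_lt_one this
    have e1 : ((p:ℚ)-1) = ((p-1:ℕ):ℚ) := by
      push_cast [Nat.cast_sub (by omega : 1 ≤ p)]; ring
    have e2 : ((d:ℚ)-1) = ((m:ℕ):ℚ) := by
      rw [hm]; push_cast [Nat.cast_sub (by omega : 1 ≤ d)]; ring
    have h1 : (((m-1)/(p-1) : ℕ) : ℚ) ≤ ((m-1:ℕ):ℚ) / ((p-1:ℕ):ℚ) :=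
      Nat.cast_div_le
    have h2 : ((m-1:ℕ):ℚ) / ((p-1:ℕ):ℚ) ≤ ((d:ℚ)-1) / ((p:ℚ)-1) := by
      rw [e1, e2]
      refine (div_le_div_iff_of_pos_right hp1pos).mpr ?_
      exact_mod_cast Nat.sub_le m 1
    have h3 : ((d:ℚ)-1)/((p:ℚ)-1) ≤ (⌈((d : ℚ) - 1) / ((p : ℚ) - 1)⌉ : ℚ) :=
      Int.le_ceil _
    have h4 : (c:ℚ) ≤ (⌈((d : ℚ) - 1) / ((p : ℚ) - 1)⌉ : ℚ) + 1 := by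
      rw [hceq]
      push_cast
      linarith
    have h5 : (c:ℤ) ≤ ⌈((d : ℚ) - 1) / ((p : ℚ) - 1)⌉ + 1 := by exact_mod_cast h4
    omega
  have hzle : (-((1 + ⌈((d : ℚ) - 1) / ((p : ℚ) - 1)⌉) * r) : ℤ) ≤ -((c * r : ℕ) : ℤ) := by
    have hmul : ((c:ℤ)) * r ≤ (1 + ⌈((d : ℚ) - 1) / ((p : ℚ) - 1)⌉) * r :=
      mul_le_mul_of_nonneg_right hcK (by positivity)
    push_cast
    linarith
  have hb1 : (1:ℝ) ≤ (p:ℝ) := by exact_mod_cast hp.one_lt.le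
  calc (p:ℝ) ^ (-((1 + ⌈((d : ℚ) - 1) / ((p : ℚ) - 1)⌉) * r))
      ≤ (p:ℝ) ^ (-((c*r:ℕ):ℤ)) := zpow_le_zpow_right₀ hb1 hzle
    _ = 1/(N:ℝ)^r := by
        rw [zpow_neg, zpow_natCast, pow_mul, one_div]
        congr 2
        rw [hN]
        push_cast
        ring
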